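/- Let N ≥ 2 and let Y(Φ) be the magnetic Hashimoto matrix with phases Φ independent and uniform on [0,2π). Then ⟨Tr[Y(Φ)^m]⟩ = 0 for every odd positive integer m, and also ⟨Tr[Y(Φ)^{2n}]⟩ = 0 for n = 1, 2, 3, 4 (i.e. for even powers m = 2, 4, 6, 8). -/

import Mathlib

open MeasureTheory Matrix

noncomputable section

/-- The uniform probability measure on `[0, 2π)`. -/
def uniformPhase : Measure ℝ :=
  (ENNReal.ofReal (2 * Real.pi))⁻¹ • volume.restrict (Set.Ico 0 (2 * Real.pi))

/-- Product measure: the phases `ω μ ν` (used for `μ < ν`) are i.i.d. uniform on `[0, 2π)`. -/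
def phaseMeasure (N : ℕ) : Measure (Fin N → Fin N → ℝ) :=
  Measure.pi fun _ => Measure.pi fun _ => uniformPhase

/-- Antisymmetrized phases built from a raw sample: `φ ν μ = - φ μ ν`, `φ μ μ = 0`. -/
def phases (N : ℕ) (ω : Fin N → Fin N → ℝ) : Fin N → Fin N → ℝ :=
  fun μ ν => if μ < ν then ω μ ν else if ν < μ then - (ω ν μ) else 0

/-- The uni-modular matrix with phases `φ`: zero diagonal, `M μ ν = exp(i φ μ ν)` off diagonal. -/
def umeMatrix (N : ℕ) (φ : Fin N → Fin N → ℝ) : Matrix (Fin N) (Fin N) ℂ :=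
  fun μ ν => if μ = ν then 0 else Complex.exp (Complex.I * (φ μ ν : ℂ))


/-- A directed edge of the complete graph on `N` vertices: a pair `e = (j, i)` with `i ≠ j`;
its origin is `e.2` and its terminus is `e.1`. -/
abbrev DirEdge (N : ℕ) : Type := {e : Fin N × Fin N // e.1 ≠ e.2}

/-- The magnetic Hashimoto matrix of the complete graph on `N` vertices with phases `φ`:
`Y(Φ)_{e',e} = (δ_{o(e'),τ(e)} − δ_{e',ê}) · exp((i/2)(φ_e + φ_{e'}))`. -/
def hashimoto (N : ℕ) (φ : Fin N → Fin N → ℝ) :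
    Matrix (DirEdge N) (DirEdge N) ℂ :=
  fun e' e =>
    (((if e'.1.2 = e.1.1 then 1 else 0) : ℂ) - ((if e'.1 = (e.1.2, e.1.1) then 1 else 0) : ℂ)) *
      Complex.exp (Complex.I / 2 * ((φ e.1.1 e.1.2 : ℂ) + (φ e'.1.1 e'.1.2 : ℂ)))


section Aux
open Finset MeasureTheory.Measure


instance : IsProbabilityMeasure uniformPhase := by
  constructor
  rw [uniformPhase]
  simp only [Measure.smul_apply, Measure.restrict_apply MeasurableSet.univ, Set.univ_inter,
    Real.volume_Ico, smul_eq_mul, sub_zero]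
  rw [ENNReal.inv_mul_cancel] <;> simp [Real.pi_pos, Real.pi_pos.le, ENNReal.mul_eq_top]

lemma key0 (c : ℤ) :
    (∫ x, Complex.exp (Complex.I * c * x) ∂uniformPhase) = if c = 0 then 1 else 0 := by
  rcases eq_or_ne c 0 with h | h
  · simp [h]
  · simp only [h, if_neg, if_false]
    rw [uniformPhase, integral_smul_measure]
    have h2 : (0:ℝ) ≤ 2 * Real.pi := by positivity
    rw [Measure.restrict_congr_set Ico_ae_eq_Ioc,
      ← intervalIntegral.integral_of_le h2]
    have hc : (Complex.I * c) ≠ 0 := by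
      simp [Complex.I_ne_zero, Complex.ext_iff]
      exact_mod_cast h
    rw [integral_exp_mul_complex hc]
    have h1 : Complex.exp (Complex.I * c * (2 * Real.pi)) = 1 := by
      have := Complex.exp_int_mul_two_pi_mul_I c
      rw [← this]
      push_cast
      ring_nf
    simp [h1]

theorem my_integral_pi_prod : ∀ {n : ℕ} {E : Fin n → Type*} [∀ i, MeasurableSpace (E i)]
    (μ : (i : Fin n) → Measure (E i)) [∀ i, SigmaFinite (μ i)] (f : (i : Fin n) → E i → ℂ),
    ∫ x, ∏ i, f i (x i) ∂Measure.pi μ = ∏ i, ∫ x, f i x ∂μ i := by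
  intro n
  induction n with
  | zero =>
      intro E _ μ _ f
      simp only [Finset.univ_eq_empty, Finset.prod_empty, integral_const,
        measureReal_def, pi_empty_univ, ENNReal.toReal_one, smul_eq_mul, mul_one, one_smul]
  | succ n n_ih =>
      intro E _ μ _ f
      calc
        _ = ∫ x : E 0 × ((i : Fin n) → E (Fin.succ i)),
            f 0 x.1 * ∏ i : Fin n, f (Fin.succ i) (x.2 i)
              ∂(μ 0).prod (Measure.pi fun i => μ (Fin.succ i)) := by
          rw [← ((measurePreserving_piFinSuccAbove μ 0).symm).integral_comp']
          simp_rw [MeasurableEquiv.piFinSuccAbove_symm_apply, Fin.insertNthEquiv,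
            Fin.prod_univ_succ, Fin.insertNth_zero, Equiv.coe_fn_mk, Fin.cons_succ,
            Fin.cons_zero]
          rfl
        _ = (∫ x, f 0 x ∂μ 0) * ∏ i : Fin n, ∫ (x : E (Fin.succ i)), f (Fin.succ i) x
              ∂μ (Fin.succ i) := by
          rw [← n_ih, ← integral_prod_mul]
        _ = ∏ i, ∫ x, f i x ∂μ i := by rw [Fin.prod_univ_succ]

variable {ι : Type*} [Fintype ι] [DecidableEq ι]

def pprod (M : Matrix ι ι ℂ) : ∀ {m : ℕ}, ι → (Fin m → ι) → ι → ℂ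
  | 0, i, _, j => M i j
  | (_+1), i, v, j => M i (v 0) * pprod M (v 0) (v ∘ Fin.succ) j

lemma pow_apply_eq (M : Matrix ι ι ℂ) : ∀ (m : ℕ) (i j : ι),
    (M ^ (m + 1)) i j = ∑ v : Fin m → ι, pprod M i v j := by
  intro m
  induction m with
  | zero =>
      intro i j
      rw [pow_one, Fintype.sum_unique]
      rfl
  | succ m ih =>
      intro i j
      have h : M ^ (m + 1 + 1) = M * M ^ (m + 1) := by rw [pow_succ']
      rw [h, Matrix.mul_apply]
      simp_rw [ih, Finset.mul_sum]
      rw [← Fintype.sum_prod_type']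
      refine Fintype.sum_equiv (Fin.consEquiv (fun _ => ι)) _ _ ?_
      rintro ⟨a, v⟩
      have he : (Fin.consEquiv (fun _ => ι)) (⟨a, v⟩ : ι × (Fin m → ι)) = Fin.cons a v := rfl
      have hc : (Fin.cons a v : Fin (m+1) → ι) ∘ Fin.succ = v := by
        funext k; simp
      rw [he]
      show M i a * pprod M a v j
        = M i ((Fin.cons a v : Fin (m+1) → ι) 0)
          * pprod M ((Fin.cons a v : Fin (m+1) → ι) 0) ((Fin.cons a v : Fin (m+1) → ι) ∘ Fin.succ) j
      rw [Fin.cons_zero, hc]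

lemma snoc_succ_eq {m : ℕ} (v : Fin (m+1) → ι) (j : ι) (k : Fin (m+1)) :
    (Fin.snoc v j : Fin (m+2) → ι) k.succ = (Fin.snoc (v ∘ Fin.succ) j : Fin (m+1) → ι) k := by
  induction k using Fin.lastCases with
  | last => rw [Fin.succ_last]; simp
  | cast q => rw [Fin.succ_castSucc]; simp only [Fin.snoc_castSucc, Function.comp_apply]

lemma pprod_eq_prod (M : Matrix ι ι ℂ) : ∀ (m : ℕ) (i : ι) (v : Fin m → ι) (j : ι),
    pprod M i v j = ∏ k : Fin (m+1), M ((Fin.cons i v : Fin (m+1) → ι) k)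
      ((Fin.snoc v j : Fin (m+1) → ι) k) := by
  intro m
  induction m with
  | zero =>
      intro i v j
      rw [Fin.prod_univ_succ]
      have h1 : (Fin.snoc v j : Fin 1 → ι) 0 = j := by
        rw [show (0 : Fin 1) = Fin.last 0 from rfl, Fin.snoc_last]
      simp [pprod, h1]
  | succ m ih =>
      intro i v j
      show M i (v 0) * pprod M (v 0) (v ∘ Fin.succ) j = _
      rw [ih]
      conv_rhs => rw [Fin.prod_univ_succ]
      have h0 : (Fin.snoc v j : Fin (m+2) → ι) 0 = v 0 := by
        have h1 : (0 : Fin (m+2)) = Fin.castSucc 0 := rfl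
        rw [h1, Fin.snoc_castSucc]
      have hct : Fin.cons (v 0) (v ∘ Fin.succ) = v := by
        funext k
        cases k using Fin.cases <;> simp
      refine congrArg₂ (· * ·) ?_ ?_
      · rw [Fin.cons_zero, h0]
      · apply Finset.prod_congr rfl
        intro k _
        rw [Fin.cons_succ, snoc_succ_eq, hct]

lemma add_one_shift {m : ℕ} (w : Fin (m+1) → ι) (k : Fin (m+1)) :
    (Fin.snoc (w ∘ Fin.succ) (w 0) : Fin (m+1) → ι) k = w (k + 1) := by
  induction k using Fin.lastCases with
  | last =>
      rw [Fin.last_add_one]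
      simp
  | cast q =>
      have h : Fin.castSucc q + 1 = q.succ := by
        apply Fin.ext
        rw [Fin.val_add_one_of_lt (Fin.castSucc_lt_last q)]
        simp
      rw [h, Fin.snoc_castSucc]
      rfl

theorem trace_pow_eq_walks (M : Matrix ι ι ℂ) (m : ℕ) :
    Matrix.trace (M ^ (m+1)) = ∑ w : Fin (m+1) → ι, ∏ k : Fin (m+1), M (w k) (w (k+1)) := by
  rw [Matrix.trace]
  simp_rw [Matrix.diag, pow_apply_eq]
  rw [← Fintype.sum_prod_type']
  refine Fintype.sum_equiv (Fin.consEquiv (fun _ => ι)) _ _ ?_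
  rintro ⟨i, v⟩
  have hw : (Fin.consEquiv (fun _ => ι)) (⟨i, v⟩ : ι × (Fin m → ι)) = Fin.cons i v := rfl
  rw [hw, pprod_eq_prod]
  apply Finset.prod_congr rfl
  intro k _
  congr 1
  have h0 : (Fin.cons i v : Fin (m+1) → ι) 0 = i := rfl
  have hs : (Fin.cons i v : Fin (m+1) → ι) ∘ Fin.succ = v := rfl
  rw [← add_one_shift (Fin.cons i v) k, hs, h0]

variable {n N : ℕ}

def stp (g : Fin (n+1) → Fin N) (k : Fin (n+1)) : Fin N × Fin N := (g k, g (k+1))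

def cntp (g : Fin (n+1) → Fin N) (p : Fin N × Fin N) : ℕ :=
  (univ.filter fun k => stp g k = p).card

lemma cntp_pos_iff (g : Fin (n+1) → Fin N) (p : Fin N × Fin N) :
    0 < cntp g p ↔ ∃ k, stp g k = p := by
  rw [cntp, Finset.card_pos]
  constructor
  · rintro ⟨k, hk⟩; exact ⟨k, (Finset.mem_filter.1 hk).2⟩
  · rintro ⟨k, hk⟩; exact ⟨k, Finset.mem_filter.2 ⟨mem_univ _, hk⟩⟩

lemma two_of_card_two {α : Type*} [DecidableEq α] {s : Finset α} (h : s.card = 2)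
    {x y z : α} (hx : x ∈ s) (hy : y ∈ s) (hz : z ∈ s) (hyx : y ≠ x) (hzx : z ≠ x) :
    y = z := by
  rcases Finset.card_eq_two.1 h with ⟨u, v, huv, rfl⟩
  simp only [Finset.mem_insert, Finset.mem_singleton] at hx hy hz
  rcases hx with rfl | rfl <;> rcases hy with rfl | rfl <;> rcases hz with rfl | rfl <;> tauto

lemma half_exists (n : ℕ) (c : Fin (n+1)) :
    (∃ k : Fin (n+1), k + k = c) ∨ (∃ k : Fin (n+1), k + k = c + 1) := by
  rcases Nat.even_or_odd c.val with he | ho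
  · obtain ⟨r, hr⟩ := he
    left
    refine ⟨⟨r, by omega⟩, ?_⟩
    have hc := c.isLt
    apply Fin.ext
    rw [Fin.val_add]
    simp only
    rw [← hr, Nat.mod_eq_of_lt hc]
  · right
    by_cases hc : c.val + 1 = n + 1
    · refine ⟨0, ?_⟩
      have hcl : c = Fin.last n := Fin.ext (by simpa using Nat.succ_injective hc)
      rw [hcl, Fin.last_add_one]
      exact Fin.ext (by simp)
    · have hlt : c.val + 1 < n + 1 := by have := c.isLt; omega
      have hlast : c < Fin.last n := by
        rw [Fin.lt_def]; simp only [Fin.val_last]; omega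
      obtain ⟨r, hr⟩ := Nat.even_add_one.2 (by simpa using ho)
      refine ⟨⟨r, by omega⟩, ?_⟩
      apply Fin.ext
      rw [Fin.val_add, Fin.val_add_one_of_lt hlast]
      simp only
      rw [← hr, Nat.mod_eq_of_lt hlt]

theorem comb_even (g : Fin (n+1) → Fin N)
    (C1 : ∀ k, g (k+1) ≠ g k)
    (C3 : ∀ p, cntp g p = cntp g p.swap) : Even (n+1) := by
  classical
  have hdiag : ∀ p : Fin N × Fin N, p.1 = p.2 → cntp g p = 0 := by
    intro p hp
    rw [cntp, Finset.card_eq_zero, Finset.filter_eq_empty_iff]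
    intro k _ hc
    apply C1 k
    have h1 : g k = p.1 := congrArg Prod.fst hc
    have h2 : g (k+1) = p.2 := congrArg Prod.snd hc
    rw [h1, h2, hp]
  have htot : n + 1 = ∑ p : Fin N × Fin N, cntp g p := by
    have h := Finset.card_eq_sum_card_fiberwise
      (f := stp g) (s := (univ : Finset (Fin (n+1)))) (t := univ) (fun x _ => mem_univ _)
    simpa [cntp] using h
  set P := (univ : Finset (Fin N × Fin N)).filter (fun p => p.1 < p.2) with hP
  set Q := (univ : Finset (Fin N × Fin N)).filter (fun p => p.2 < p.1) with hQ
  have hsplit : ∑ p : Fin N × Fin N, cntp g p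
      = ∑ p ∈ P, cntp g p + ∑ p ∈ univ.filter (fun p : Fin N × Fin N => ¬ p.1 < p.2), cntp g p :=
    (Finset.sum_filter_add_sum_filter_not _ _ _).symm
  have hQsub : ∑ p ∈ Q, cntp g p
      = ∑ p ∈ univ.filter (fun p : Fin N × Fin N => ¬ p.1 < p.2), cntp g p := by
    apply Finset.sum_subset
    · intro p hp
      rw [hQ, Finset.mem_filter] at hp
      exact Finset.mem_filter.2 ⟨mem_univ _, not_lt_of_gt hp.2⟩
    · intro p hp hnp
      rw [Finset.mem_filter] at hp
      rw [hQ, Finset.mem_filter] at hnp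
      push_neg at hnp
      exact hdiag p (le_antisymm (hnp (mem_univ _)) (not_lt.1 hp.2))
  have hQP : ∑ p ∈ Q, cntp g p = ∑ p ∈ P, cntp g p := by
    refine Finset.sum_nbij' (i := Prod.swap) (j := Prod.swap) ?_ ?_ ?_ ?_ ?_
    · intro p hp
      rw [hQ, Finset.mem_filter] at hp
      exact Finset.mem_filter.2 ⟨mem_univ _, hp.2⟩
    · intro p hp
      rw [hP, Finset.mem_filter] at hp
      exact Finset.mem_filter.2 ⟨mem_univ _, hp.2⟩
    · intro p _; rfl
    · intro p _; rfl
    · intro p _; exact C3 p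
  refine ⟨∑ p ∈ P, cntp g p, ?_⟩
  rw [htot, hsplit, ← hQsub, hQP]


def Fedges (g : Fin (n+1) → Fin N) : Finset (Fin N × Fin N) := univ.image (stp g)

def out (g : Fin (n+1) → Fin N) (a : Fin N) : Finset (Fin N) :=
  ((univ.filter fun k => g k = a)).image (fun k => g (k+1))

lemma mem_out_iff (g : Fin (n+1) → Fin N) (a b : Fin N) :
    b ∈ out g a ↔ ∃ k, g k = a ∧ g (k+1) = b := by
  simp only [out, Finset.mem_image, Finset.mem_filter, mem_univ, true_and]

/-- determinism of the reversed walk when all degrees are 2 -/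
lemma det_lemma (g : Fin (n+1) → Fin N)
    (C1 : ∀ k, g (k+1) ≠ g k)
    (C2 : ∀ k, g (k+1+1) ≠ g k)
    (C3 : ∀ p, cntp g p = cntp g p.swap)
    (hrigid : ∀ a ∈ univ.image g, (out g a).card = 2)
    (k k' : Fin (n+1)) (h : stp g k' = (stp g (k+1)).swap) :
    stp g (k'+1) = (stp g k).swap := by
  have h1 : g k' = g (k+1+1) := congrArg Prod.fst h
  have h2 : g (k'+1) = g (k+1) := congrArg Prod.snd h
  have hb : g (k+1) ∈ univ.image g := Finset.mem_image.2 ⟨k+1, mem_univ _, rfl⟩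
  have hcard := hrigid _ hb
  have hx : g (k+1+1) ∈ out g (g (k+1)) := (mem_out_iff _ _ _).2 ⟨k+1, rfl, rfl⟩
  have hy : g (k'+1+1) ∈ out g (g (k+1)) := (mem_out_iff _ _ _).2 ⟨k'+1, h2, rfl⟩
  have hz : g k ∈ out g (g (k+1)) := by
    have hpos : 0 < cntp g (g (k+1), g k) := by
      rw [C3]
      exact (cntp_pos_iff _ _).2 ⟨k, rfl⟩
    obtain ⟨j, hj⟩ := (cntp_pos_iff _ _).1 hpos
    exact (mem_out_iff _ _ _).2 ⟨j, congrArg Prod.fst hj, congrArg Prod.snd hj⟩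
  have hyx : g (k'+1+1) ≠ g (k+1+1) := by rw [← h1]; exact C2 k'
  have hzx : g k ≠ g (k+1+1) := fun hek => C2 k hek.symm
  have := two_of_card_two hcard hx hy hz hyx hzx
  show (g (k'+1), g (k'+1+1)) = (g (k+1), g k)
  rw [h2, this]

open Fin.NatCast Fin.CommRing in
theorem comb_small (g : Fin (n+1) → Fin N)
    (C1 : ∀ k, g (k+1) ≠ g k)
    (C2 : ∀ k, g (k+1+1) ≠ g k)
    (C3 : ∀ p, cntp g p = cntp g p.swap)
    (h9 : n + 1 ≤ 9) : False := by
  classical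
  -- n+1 is even hence ≤ 8
  obtain ⟨t, ht⟩ := comb_even g C1 C3
  have h8 : n + 1 ≤ 8 := by omega
  -- n+1 = 2 is impossible directly
  rcases Nat.lt_or_ge (n+1) 3 with hn3 | hn3
  · -- n = 0 or 1
    have hn : n = 0 ∨ n = 1 := by omega
    rcases hn with rfl | rfl
    · exact C1 0 (congrArg g (by decide))
    · exact C2 0 (congrArg g (by decide))
  -- now 3 ≤ n+1
  set S := (univ.image g : Finset (Fin N)) with hS
  set F := Fedges g with hF
  have hmemF : ∀ p, p ∈ F ↔ ∃ k, stp g k = p := by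
    intro p
    simp only [hF, Fedges, Finset.mem_image, mem_univ, true_and]
  have hFfst : ∀ p ∈ F, p.1 ∈ S := by
    intro p hp
    obtain ⟨k, hk⟩ := (hmemF p).1 hp
    exact Finset.mem_image.2 ⟨k, mem_univ _, congrArg Prod.fst hk⟩
  have hFdiag : ∀ p ∈ F, p.1 ≠ p.2 := by
    intro p hp
    obtain ⟨k, hk⟩ := (hmemF p).1 hp
    have h1 : g k = p.1 := congrArg Prod.fst hk
    have h2 : g (k+1) = p.2 := congrArg Prod.snd hk
    rw [← h1, ← h2]
    exact fun hc => C1 k hc.symm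
  have hFsnd : ∀ p ∈ F, p.2 ∈ S := by
    intro p hp
    obtain ⟨k, hk⟩ := (hmemF p).1 hp
    exact Finset.mem_image.2 ⟨k+1, mem_univ _, congrArg Prod.snd hk⟩
  -- sum of fibers
  have hfib : F.card = ∑ a ∈ S, (F.filter fun p => p.1 = a).card :=
    Finset.card_eq_sum_card_fiberwise hFfst
  -- out a ≤ fiber card
  have houtle : ∀ a, (out g a).card ≤ (F.filter fun p => p.1 = a).card := by
    intro a
    have hsub : out g a ⊆ (F.filter fun p => p.1 = a).image Prod.snd := by
      intro b hb
      obtain ⟨k, hk1, hk2⟩ := (mem_out_iff g a b).1 hb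
      refine Finset.mem_image.2 ⟨(a, b), ?_, rfl⟩
      exact Finset.mem_filter.2 ⟨(hmemF _).2 ⟨k, by rw [stp, hk1, hk2]⟩, rfl⟩
    calc (out g a).card ≤ ((F.filter fun p => p.1 = a).image Prod.snd).card :=
          Finset.card_le_card hsub
      _ ≤ (F.filter fun p => p.1 = a).card := Finset.card_image_le
  -- every vertex has ≥ 2 out-neighbours
  have hout2 : ∀ a ∈ S, 2 ≤ (out g a).card := by
    intro a ha
    obtain ⟨k, _, rfl⟩ := Finset.mem_image.1 ha
    have hx : g (k+1) ∈ out g (g k) := (mem_out_iff _ _ _).2 ⟨k, rfl, rfl⟩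
    have hy : g (k-1) ∈ out g (g k) := by
      have hpos : 0 < cntp g (g k, g (k-1)) := by
        have : (g (k-1), g k) = stp g (k-1) := by
          rw [stp]; congr 1; rw [sub_add_cancel]
        rw [C3]
        exact (cntp_pos_iff _ _).2 ⟨k-1, this.symm⟩
      obtain ⟨j, hj⟩ := (cntp_pos_iff _ _).1 hpos
      exact (mem_out_iff _ _ _).2 ⟨j, congrArg Prod.fst hj, congrArg Prod.snd hj⟩
    have hne : g (k+1) ≠ g (k-1) := by
      have hcc := C2 (k-1)
      rw [sub_add_cancel] at hcc
      exact fun hc => hcc hc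
    exact Finset.one_lt_card.2 ⟨_, hx, _, hy, hne⟩
  -- 2 |S| ≤ |F|
  have hSF : 2 * S.card ≤ F.card := by
    calc 2 * S.card = ∑ _a ∈ S, 2 := by rw [Finset.sum_const, smul_eq_mul, mul_comm]
      _ ≤ ∑ a ∈ S, (out g a).card := Finset.sum_le_sum hout2
      _ ≤ ∑ a ∈ S, (F.filter fun p => p.1 = a).card := Finset.sum_le_sum (fun a _ => houtle a)
      _ = F.card := hfib.symm
  have hFn : F.card ≤ n + 1 := by
    calc F.card ≤ (univ : Finset (Fin (n+1))).card := Finset.card_image_le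
      _ = n + 1 := by simp
  -- |S| ≥ 3
  have hS3 : 3 ≤ S.card := by
    have h01 : g (0+1) ≠ g 0 := C1 0
    have h02 : g (0+1+1) ≠ g 0 := C2 0
    have h12 : g (0+1+1) ≠ g (0+1) := C1 (0+1)
    have hsub : ({g 0, g (0+1), g (0+1+1)} : Finset (Fin N)) ⊆ S := by
      intro x hx
      simp only [Finset.mem_insert, Finset.mem_singleton] at hx
      rcases hx with rfl | rfl | rfl
      · exact Finset.mem_image.2 ⟨0, mem_univ _, rfl⟩
      · exact Finset.mem_image.2 ⟨0+1, mem_univ _, rfl⟩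
      · exact Finset.mem_image.2 ⟨0+1+1, mem_univ _, rfl⟩
    have hcard3 : ({g 0, g (0+1), g (0+1+1)} : Finset (Fin N)).card = 3 := by
      rw [Finset.card_insert_of_notMem, Finset.card_insert_of_notMem, Finset.card_singleton]
      · simp only [Finset.mem_singleton]; exact fun hc => h12 hc.symm
      · simp only [Finset.mem_insert, Finset.mem_singleton]
        push_neg
        exact ⟨fun hc => h01 hc.symm, fun hc => h02 hc.symm⟩
    calc 3 = ({g 0, g (0+1), g (0+1+1)} : Finset (Fin N)).card := hcard3.symm
      _ ≤ S.card := Finset.card_le_card hsub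
  have hS4 : S.card ≤ 4 := by omega
  -- |F| ≤ 2 |S|
  have hFoff : F ⊆ S.offDiag := by
    intro p hp
    exact Finset.mem_offDiag.2 ⟨hFfst p hp, hFsnd p hp, hFdiag p hp⟩
  have hF2S : F.card ≤ 2 * S.card := by
    rcases Nat.lt_or_ge S.card 4 with hlt | hge
    · have hS3' : S.card = 3 := by omega
      calc F.card ≤ S.offDiag.card := Finset.card_le_card hFoff
        _ = S.card * S.card - S.card := Finset.offDiag_card S
        _ = 6 := by rw [hS3']
        _ = 2 * S.card := by rw [hS3']
    · have hS4' : S.card = 4 := by omega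
      calc F.card ≤ n + 1 := hFn
        _ ≤ 8 := h8
        _ = 2 * S.card := by rw [hS4']
  -- rigidity : all out-degrees are exactly 2
  have hrigid : ∀ a ∈ univ.image g, (out g a).card = 2 := by
    intro a ha
    by_contra hne
    have h3 : 3 ≤ (out g a).card := by
      have := hout2 a ha
      omega
    have hstrict : 2 * S.card < ∑ b ∈ S, (out g b).card := by
      have := Finset.sum_lt_sum (f := fun _ => 2) (g := fun b => (out g b).card)
        (s := S) (fun b hb => hout2 b hb) ⟨a, ha, by show 2 < (out g a).card; omega⟩
      calc 2 * S.card = ∑ _b ∈ S, 2 := by rw [Finset.sum_const, smul_eq_mul, mul_comm]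
        _ < ∑ b ∈ S, (out g b).card := this
    have hle : ∑ b ∈ S, (out g b).card ≤ F.card := by
      calc ∑ b ∈ S, (out g b).card ≤ ∑ b ∈ S, (F.filter fun p => p.1 = b).card :=
            Finset.sum_le_sum (fun b _ => houtle b)
        _ = F.card := hfib.symm
    omega
  -- find the reversed step
  have hd : ∃ d, stp g d = (stp g 0).swap := by
    have hpos : 0 < cntp g ((stp g 0).swap) := by
      rw [← C3]
      exact (cntp_pos_iff _ _).2 ⟨0, rfl⟩
    exact (cntp_pos_iff _ _).1 hpos
  obtain ⟨d, hd⟩ := hd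
  -- palindrome property
  have hpal : ∀ i : ℕ, stp g (d + (i : Fin (n+1))) = (stp g (0 - (i : Fin (n+1)))).swap := by
    intro i
    induction i with
    | zero => simpa using hd
    | succ i ih =>
        have hdet := det_lemma g C1 C2 C3 hrigid (0 - (i:Fin (n+1)) - 1) (d + (i:Fin (n+1)))
          (by rw [sub_add_cancel]; exact ih)
        have e1 : d + ((i+1 : ℕ) : Fin (n+1)) = d + (i : Fin (n+1)) + 1 := by
          push_cast; ring
        have e2 : (0:Fin (n+1)) - ((i+1 : ℕ) : Fin (n+1)) = 0 - (i : Fin (n+1)) - 1 := by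
          push_cast; ring
        rw [e1, e2]
        exact hdet
  have hpal' : ∀ k : Fin (n+1), stp g (d + k) = (stp g (0 - k)).swap := by
    intro k
    have := hpal k.val
    rwa [Fin.cast_val_eq_self] at this
  -- final contradiction
  rcases half_exists n (0 - d - 1) with ⟨k, hk⟩ | ⟨k, hk⟩
  · -- k + k = -d - 1 : C2 contradiction
    have hu := hpal' k
    have e3 : (0:Fin (n+1)) - k = d + k + 1 := by linear_combination -hk
    rw [e3] at hu
    have hfst : g (d + k) = g (d + k + 1 + 1) := congrArg Prod.fst hu
    exact C2 (d + k) hfst.symm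
  · -- k + k = -d : fixed point, C1 contradiction
    have hu := hpal' k
    have e3 : (0:Fin (n+1)) - k = d + k := by linear_combination -hk
    rw [e3] at hu
    have hfst : g (d + k) = g (d + k + 1) := congrArg Prod.fst hu
    exact C1 (d + k) hfst.symm

end Aux

section Main
open Finset

variable {N : ℕ}

instance : IsProbabilityMeasure (phaseMeasure N) := by
  rw [phaseMeasure]
  infer_instance

instance : SigmaFinite (Measure.pi fun _ : Fin N => uniformPhase) := by infer_instance

lemma measurable_phases (μ ν : Fin N) :
    Measurable (fun ω : Fin N → Fin N → ℝ => phases N ω μ ν) := by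
  unfold phases
  split_ifs
  · exact (measurable_pi_apply ν).comp (measurable_pi_apply μ)
  · have h : Measurable (fun ω : Fin N → Fin N → ℝ => ω ν μ) :=
      (measurable_pi_apply μ).comp (measurable_pi_apply ν)
    exact h.neg
  · exact measurable_const

end Main

section Main2
open Finset

variable {N : ℕ}

def bterm {N : ℕ} (e' e : DirEdge N) : ℂ :=
  (((if e'.1.2 = e.1.1 then 1 else 0) : ℂ) - ((if e'.1 = (e.1.2, e.1.1) then 1 else 0) : ℂ))

lemma entry_eq (ω : Fin N → Fin N → ℝ) (e' e : DirEdge N) :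
    hashimoto N (phases N ω) e' e
      = bterm e' e * Complex.exp (Complex.I / 2 *
          ((phases N ω e.1.1 e.1.2 : ℂ) + (phases N ω e'.1.1 e'.1.2 : ℂ))) := rfl

lemma entry_norm_le (ω : Fin N → Fin N → ℝ) (e' e : DirEdge N) :
    ‖hashimoto N (phases N ω) e' e‖ ≤ 1 := by
  rw [entry_eq, norm_mul]
  have hz : Complex.I / 2 * ((phases N ω e.1.1 e.1.2 : ℂ) + (phases N ω e'.1.1 e'.1.2 : ℂ))
      = (((phases N ω e.1.1 e.1.2 + phases N ω e'.1.1 e'.1.2) / 2 : ℝ) : ℂ) * Complex.I := by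
    push_cast; ring
  rw [hz]
  have he : ‖Complex.exp ((((phases N ω e.1.1 e.1.2 + phases N ω e'.1.1 e'.1.2) / 2 : ℝ) : ℂ)
      * Complex.I)‖ = 1 := by
    rw [Complex.norm_exp_ofReal_mul_I]
  rw [he, mul_one]
  rw [bterm]
  split_ifs <;> norm_num

lemma meas_entry (e' e : DirEdge N) :
    Measurable (fun ω : Fin N → Fin N → ℝ => hashimoto N (phases N ω) e' e) := by
  simp_rw [entry_eq]
  have h1 : Measurable (fun ω : Fin N → Fin N → ℝ =>
      ((phases N ω e.1.1 e.1.2 : ℂ) + (phases N ω e'.1.1 e'.1.2 : ℂ))) :=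
    (Complex.measurable_ofReal.comp (measurable_phases _ _)).add
      (Complex.measurable_ofReal.comp (measurable_phases _ _))
  exact measurable_const.mul (Complex.measurable_exp.comp (h1.const_mul (Complex.I / 2)))

variable {m' : ℕ}

lemma meas_walk (w : Fin (m'+1) → DirEdge N) :
    Measurable (fun ω : Fin N → Fin N → ℝ =>
      ∏ k : Fin (m'+1), hashimoto N (phases N ω) (w k) (w (k+1))) :=
  Finset.measurable_prod _ (fun k _ => meas_entry (w k) (w (k+1)))

lemma integrable_walk (w : Fin (m'+1) → DirEdge N) :
    Integrable (fun ω : Fin N → Fin N → ℝ =>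
      ∏ k : Fin (m'+1), hashimoto N (phases N ω) (w k) (w (k+1))) (phaseMeasure N) := by
  refine (integrable_const (1:ℝ)).mono' (meas_walk w).aestronglyMeasurable ?_
  refine Filter.Eventually.of_forall (fun ω => ?_)
  calc ‖∏ k : Fin (m'+1), hashimoto N (phases N ω) (w k) (w (k+1))‖
      = ∏ k : Fin (m'+1), ‖hashimoto N (phases N ω) (w k) (w (k+1))‖ := norm_prod _ _
    _ ≤ 1 := Finset.prod_le_one (fun k _ => norm_nonneg _)
        (fun k _ => entry_norm_le ω (w k) (w (k+1)))

lemma walk_split (w : Fin (m'+1) → DirEdge N) (ω : Fin N → Fin N → ℝ) :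
    ∏ k : Fin (m'+1), hashimoto N (phases N ω) (w k) (w (k+1))
      = (∏ k : Fin (m'+1), bterm (w k) (w (k+1)))
        * Complex.exp (Complex.I *
            ((∑ k : Fin (m'+1), phases N ω (w k).1.1 (w k).1.2 : ℝ) : ℂ)) := by
  simp_rw [entry_eq]
  rw [Finset.prod_mul_distrib, ← Complex.exp_sum]
  congr 1
  have hshift : ∑ k : Fin (m'+1), (phases N ω (w (k+1)).1.1 (w (k+1)).1.2 : ℂ)
      = ∑ k : Fin (m'+1), (phases N ω (w k).1.1 (w k).1.2 : ℂ) :=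
    Fintype.sum_equiv (Equiv.addRight (1 : Fin (m'+1))) _ _ (fun k => rfl)
  rw [← Finset.mul_sum, Finset.sum_add_distrib, hshift, Complex.ofReal_sum]
  ring

def wcnt {N m' : ℕ} (w : Fin (m'+1) → DirEdge N) (a b : Fin N) : ℕ :=
  (Finset.univ.filter fun k => (w k).1 = (a, b)).card

def wc {N m' : ℕ} (w : Fin (m'+1) → DirEdge N) (μ ν : Fin N) : ℤ :=
  if μ < ν then (wcnt w μ ν : ℤ) - wcnt w ν μ else 0

section Main3
open Finset

variable {N m' : ℕ}

lemma point_sum (p : Fin N × Fin N) (hp : p.1 ≠ p.2) (ω : Fin N → Fin N → ℝ) :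
    ∑ μ : Fin N, ∑ ν : Fin N,
      ((if μ < ν then (((if p = (μ, ν) then (1:ℝ) else 0)) - ((if p = (ν, μ) then 1 else 0)))
        else 0) * ω μ ν)
      = phases N ω p.1 p.2 := by
  rcases lt_or_gt_of_ne hp with h | h
  · -- p.1 < p.2 : only the (p.1, p.2) term survives, contributing ω p.1 p.2
    rw [Finset.sum_eq_single p.1]
    · rw [Finset.sum_eq_single p.2]
      · have h1 : p = (p.1, p.2) := rfl
        have h2 : p ≠ (p.2, p.1) := fun hc => hp (congrArg Prod.fst hc)
        simp only [h, if_true, ← h1, if_pos rfl, if_neg h2, phases, sub_zero, one_mul]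
      · intro ν _ hν
        by_cases hlt : p.1 < ν
        · have e1 : p ≠ (p.1, ν) := fun hc => hν (congrArg Prod.snd hc).symm
          have e2 : p ≠ (ν, p.1) := fun hc => hp (congrArg Prod.snd hc).symm
          simp [hlt, e1, e2]
        · simp [hlt]
      · intro hc; exact absurd (mem_univ p.2) hc
    · intro μ _ hμ
      apply Finset.sum_eq_zero
      intro ν _
      by_cases hlt : μ < ν
      · have e1 : p ≠ (μ, ν) := fun hc => hμ (congrArg Prod.fst hc).symm
        have e2 : p ≠ (ν, μ) := by
          intro hc
          have hν : p.1 = ν := congrArg Prod.fst hc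
          have hμ2 : p.2 = μ := congrArg Prod.snd hc
          rw [hν, hμ2] at h
          exact absurd hlt (asymm h)
        simp [hlt, e1, e2]
      · simp [hlt]
    · intro hc; exact absurd (mem_univ p.1) hc
  · -- p.2 < p.1 : only the (p.2, p.1) term survives, contributing -ω p.2 p.1
    rw [Finset.sum_eq_single p.2]
    · rw [Finset.sum_eq_single p.1]
      · have h2 : p ≠ (p.2, p.1) := fun hc => hp (congrArg Prod.fst hc)
        have h1 : p = (p.1, p.2) := rfl
        have hnl : ¬ p.1 < p.2 := asymm h
        simp only [h, if_true, if_neg h2, ← h1, if_pos rfl, phases, hnl, if_false, zero_sub,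
          neg_mul, one_mul]
      · intro ν _ hν
        by_cases hlt : p.2 < ν
        · have e1 : p ≠ (p.2, ν) := fun hc => hp (congrArg Prod.fst hc)
          have e2 : p ≠ (ν, p.2) := fun hc => hν (congrArg Prod.fst hc).symm
          simp [hlt, e1, e2]
        · simp [hlt]
      · intro hc; exact absurd (mem_univ p.1) hc
    · intro μ _ hμ
      apply Finset.sum_eq_zero
      intro ν _
      by_cases hlt : μ < ν
      · have e1 : p ≠ (μ, ν) := by
          intro hc
          have hν : p.2 = ν := congrArg Prod.snd hc
          have hμ2 : p.1 = μ := congrArg Prod.fst hc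
          rw [hν, hμ2] at h
          exact absurd hlt (asymm h)
        have e2 : p ≠ (ν, μ) := fun hc => hμ (congrArg Prod.snd hc).symm
        simp [hlt, e1, e2]
      · simp [hlt]
    · intro hc; exact absurd (mem_univ p.2) hc

lemma rsum_eq (w : Fin (m'+1) → DirEdge N) (ω : Fin N → Fin N → ℝ) :
    (∑ k : Fin (m'+1), phases N ω (w k).1.1 (w k).1.2 : ℝ)
      = ∑ μ : Fin N, ∑ ν : Fin N, ((wc w μ ν : ℝ) * ω μ ν) := by
  have hc : ∀ μ ν : Fin N, (wc w μ ν : ℝ)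
      = ∑ k : Fin (m'+1), (if μ < ν then (((if (w k).1 = (μ, ν) then (1:ℝ) else 0))
          - ((if (w k).1 = (ν, μ) then 1 else 0))) else 0) := by
    intro μ ν
    by_cases hlt : μ < ν
    · simp only [wc, hlt, if_true, wcnt]
      push_cast [Finset.card_filter]
      rw [Finset.sum_sub_distrib]
    · simp [wc, hlt]
  simp_rw [hc, Finset.sum_mul]
  have hpt : ∀ k : Fin (m'+1), phases N ω (w k).1.1 (w k).1.2
      = ∑ μ : Fin N, ∑ ν : Fin N,
          ((if μ < ν then (((if (w k).1 = (μ, ν) then (1:ℝ) else 0))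
            - ((if (w k).1 = (ν, μ) then 1 else 0))) else 0) * ω μ ν) :=
    fun k => (point_sum (w k).1 (w k).prop ω).symm
  simp_rw [hpt]
  rw [Finset.sum_comm]
  exact Finset.sum_congr rfl (fun μ _ => Finset.sum_comm)

end Main3

section Main4
open Finset

variable {N m' : ℕ}

lemma walk_exists_unbalanced (w : Fin (m'+1) → DirEdge N)
    (hgood : ∀ k : Fin (m'+1),
      (w k).1.2 = (w (k+1)).1.1 ∧ (w k).1 ≠ ((w (k+1)).1.2, (w (k+1)).1.1))
    (hcond : Odd (m'+1) ∨ m'+1 ≤ 9) :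
    ∃ μ ν : Fin N, wc w μ ν ≠ 0 := by
  by_contra hall
  push_neg at hall
  set g : Fin (m'+1) → Fin N := fun k => (w k).1.1 with hg
  have hsnd : ∀ k, (w k).1.2 = g (k+1) := fun k => (hgood k).1
  have hpair : ∀ k, (w k).1 = (g k, g (k+1)) := by
    intro k
    have h := Prod.mk.eta (p := (w k).1)
    rw [← h, hsnd k]
  have C1 : ∀ k, g (k+1) ≠ g k := by
    intro k hc
    have hp := (w k).prop
    rw [hpair k] at hp
    exact hp hc.symm
  have C2 : ∀ k, g (k+1+1) ≠ g k := by
    intro k hc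
    apply (hgood k).2
    rw [hpair k, hsnd (k+1)]
    show (g k, g (k+1)) = (g (k+1+1), (w (k+1)).1.1)
    rw [hc]
  have hcnt : ∀ p : Fin N × Fin N, cntp g p = wcnt w p.1 p.2 := by
    intro p
    unfold cntp wcnt
    congr 1
    apply Finset.filter_congr
    intro k _
    rw [show stp g k = (w k).1 from (hpair k).symm, Prod.mk.eta]
  have C3 : ∀ p : Fin N × Fin N, cntp g p = cntp g p.swap := by
    intro p
    rcases lt_trichotomy p.1 p.2 with h | h | h
    · have h0 := hall p.1 p.2
      rw [wc, if_pos h] at h0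
      have : wcnt w p.1 p.2 = wcnt w p.2 p.1 := by omega
      rw [hcnt, hcnt, this]
      simp
    · rw [show p.swap = p from Prod.ext h.symm h]
    · have h0 := hall p.2 p.1
      rw [wc, if_pos h] at h0
      have : wcnt w p.2 p.1 = wcnt w p.1 p.2 := by omega
      rw [hcnt, hcnt]
      simp only [Prod.fst_swap, Prod.snd_swap]
      omega
  rcases hcond with hodd | h9
  · exact (Nat.not_odd_iff_even.2 (comb_even g C1 C3)) hodd
  · exact comb_small g C1 C2 C3 h9

lemma walk_integral_zero (hcond : Odd (m'+1) ∨ m'+1 ≤ 9) (w : Fin (m'+1) → DirEdge N) :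
    (∫ ω, ∏ k : Fin (m'+1), hashimoto N (phases N ω) (w k) (w (k+1)) ∂(phaseMeasure N)) = 0 := by
  by_cases hgood : ∀ k : Fin (m'+1),
      (w k).1.2 = (w (k+1)).1.1 ∧ (w k).1 ≠ ((w (k+1)).1.2, (w (k+1)).1.1)
  · -- non-backtracking walk: integrate the phases
    have hb1 : ∀ k, bterm (w k) (w (k+1)) = 1 := by
      intro k
      rw [bterm, if_pos (hgood k).1, if_neg (hgood k).2, sub_zero]
    have hsplit : ∀ ω : Fin N → Fin N → ℝ,
        ∏ k : Fin (m'+1), hashimoto N (phases N ω) (w k) (w (k+1))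
          = ∏ μ : Fin N, ∏ ν : Fin N,
              Complex.exp (Complex.I * ((wc w μ ν : ℤ) : ℂ) * ((ω μ ν : ℝ) : ℂ)) := by
      intro ω
      rw [walk_split, Finset.prod_eq_one (fun k _ => hb1 k), one_mul, rsum_eq]
      rw [Complex.ofReal_sum, Finset.mul_sum, Complex.exp_sum]
      refine Finset.prod_congr rfl (fun μ _ => ?_)
      rw [Complex.ofReal_sum, Finset.mul_sum, Complex.exp_sum]
      refine Finset.prod_congr rfl (fun ν _ => ?_)
      push_cast
      ring_nf
    simp_rw [hsplit]
    have hμeq : phaseMeasure N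
        = Measure.pi (fun _ : Fin N => Measure.pi fun _ : Fin N => uniformPhase) := rfl
    rw [hμeq, my_integral_pi_prod (fun _ : Fin N => Measure.pi fun _ : Fin N => uniformPhase)
      (fun μ row => ∏ ν : Fin N, Complex.exp (Complex.I * ((wc w μ ν : ℤ) : ℂ) * ((row ν : ℝ) : ℂ)))]
    have hinner : ∀ μ : Fin N,
        (∫ row : Fin N → ℝ, ∏ ν : Fin N,
          Complex.exp (Complex.I * ((wc w μ ν : ℤ) : ℂ) * ((row ν : ℝ) : ℂ))
          ∂(Measure.pi fun _ : Fin N => uniformPhase))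
        = ∏ ν : Fin N, if wc w μ ν = 0 then 1 else 0 := by
      intro μ
      rw [my_integral_pi_prod (fun _ : Fin N => uniformPhase)
        (fun ν x => Complex.exp (Complex.I * ((wc w μ ν : ℤ) : ℂ) * ((x : ℝ) : ℂ)))]
      exact Finset.prod_congr rfl (fun ν _ => key0 (wc w μ ν))
    simp_rw [hinner]
    obtain ⟨μ0, ν0, h0⟩ := walk_exists_unbalanced w hgood hcond
    refine Finset.prod_eq_zero (mem_univ μ0) ?_
    refine Finset.prod_eq_zero (mem_univ ν0) ?_
    rw [if_neg h0]
  · -- backtracking or broken walk: the integrand vanishes identically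
    push_neg at hgood
    obtain ⟨k, hk⟩ := hgood
    have hb : bterm (w k) (w (k+1)) = 0 := by
      rw [bterm]
      by_cases h1 : (w k).1.2 = (w (k+1)).1.1
      · rw [if_pos h1, if_pos (hk h1), sub_self]
      · rw [if_neg h1, if_neg, sub_self]
        intro hc
        exact h1 (congrArg Prod.snd hc)
    have hzero : ∀ ω : Fin N → Fin N → ℝ,
        ∏ j : Fin (m'+1), hashimoto N (phases N ω) (w j) (w (j+1)) = 0 := by
      intro ω
      rw [walk_split, Finset.prod_eq_zero (mem_univ k) hb, zero_mul]
    simp_rw [hzero]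
    exact integral_zero _ _

theorem main_zero (hcond : Odd (m'+1) ∨ m'+1 ≤ 9) :
    (∫ ω, Matrix.trace ((hashimoto N (phases N ω)) ^ (m'+1)) ∂(phaseMeasure N)) = 0 := by
  have h1 : ∀ ω : Fin N → Fin N → ℝ,
      Matrix.trace ((hashimoto N (phases N ω)) ^ (m'+1))
        = ∑ w : Fin (m'+1) → DirEdge N, ∏ k : Fin (m'+1),
            hashimoto N (phases N ω) (w k) (w (k+1)) :=
    fun ω => trace_pow_eq_walks _ _
  simp_rw [h1]
  rw [integral_finset_sum _ (fun w _ => integrable_walk w)]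
  exact Finset.sum_eq_zero (fun w _ => walk_integral_zero hcond w)

end Main4

/-- for `N ≥ 2` and i.i.d. uniform phases, `⟨Tr[Y(Φ)^m]⟩ = 0` for every odd
positive `m`, and `⟨Tr[Y(Φ)^{2n}]⟩ = 0` for `n = 1, 2, 3, 4`. -/
theorem hashimoto_trace_low_moments_zero (N : ℕ) (hN : 2 ≤ N) :
    (∀ m : ℕ, 0 < m → Odd m →
      (∫ ω, Matrix.trace ((hashimoto N (phases N ω)) ^ m) ∂(phaseMeasure N)) = 0) ∧
    (∀ n : ℕ, 1 ≤ n → n ≤ 4 →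
      (∫ ω, Matrix.trace ((hashimoto N (phases N ω)) ^ (2 * n)) ∂(phaseMeasure N)) = 0) := by
  constructor
  · intro m hm hodd
    obtain ⟨m', rfl⟩ : ∃ m', m = m' + 1 := ⟨m - 1, by omega⟩
    exact main_zero (Or.inl hodd)
  · intro n h1 h4
    obtain ⟨m', hm⟩ : ∃ m', 2 * n = m' + 1 := ⟨2 * n - 1, by omega⟩
    rw [hm]
    exact main_zero (Or.inr (by omega))
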